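/- If F' ⊆ F are forests related by deleting the nodes of F \ F' from F, then for any forest G, |sim(F, G) - sim(F', G)| ≤ 2·|F \ F'|. -/
import Mathlib


/-- Ordered rooted trees with node labels from `α`. -/
inductive Tree' (α : Type) : Type
  | node (label : α) (children : List (Tree' α))

/-- An ordered forest is an ordered list of trees. -/
abbrev Forest (α : Type) := List (Tree' α)

mutual
/-- Number of nodes of a tree. -/
def Tree'.size {α : Type} : Tree' α → ℕ
  | .node _ cs => 1 + Forest.size cs
/-- Number of nodes of a forest. -/
def Forest.size {α : Type} : Forest α → ℕ
  | [] => 0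
  | t :: ts => Tree'.size t + Forest.size ts
end

/-- A single edit operation on a forest: delete a node (promoting its children, in
order, to its parent) or relabel a node. -/
inductive EditStep {α : Type} : Forest α → Forest α → Prop
  | delete (pre : Forest α) (a : α) (cs post : Forest α) :
      EditStep (pre ++ Tree'.node a cs :: post) (pre ++ cs ++ post)
  | relabel (pre : Forest α) (a b : α) (cs post : Forest α) :
      EditStep (pre ++ Tree'.node a cs :: post) (pre ++ Tree'.node b cs :: post)
  | inside (pre : Forest α) (a : α) {cs cs' : Forest α} (post : Forest α) :
      EditStep cs cs' →
      EditStep (pre ++ Tree'.node a cs :: post) (pre ++ Tree'.node a cs' :: post)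

/-- `EditSteps n F G`: `G` is obtained from `F` by exactly `n` edit operations. -/
inductive EditSteps {α : Type} : ℕ → Forest α → Forest α → Prop
  | refl (F : Forest α) : EditSteps 0 F F
  | tail {n : ℕ} {F G H : Forest α} : EditSteps n F G → EditStep G H → EditSteps (n + 1) F H

/-- The (unweighted) tree edit distance: the minimum total number of relabelings
and deletions applied to `F1` and `F2` so that they become identical. -/
noncomputable def ed {α : Type} (F1 F2 : Forest α) : ℕ :=
  sInf {k | ∃ (k1 k2 : ℕ) (G : Forest α), k = k1 + k2 ∧ EditSteps k1 F1 G ∧ EditSteps k2 F2 G}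

/-- The similarity between two forests. -/
noncomputable def sim {α : Type} (F1 F2 : Forest α) : ℤ :=
  (Forest.size F1 : ℤ) + Forest.size F2 - ed F1 F2

/-- A single node-removal operation on a forest. -/
inductive DelStep {α : Type} : Forest α → Forest α → Prop
  | delete (pre : Forest α) (a : α) (cs post : Forest α) :
      DelStep (pre ++ Tree'.node a cs :: post) (pre ++ cs ++ post)
  | inside (pre : Forest α) (a : α) {cs cs' : Forest α} (post : Forest α) :
      DelStep cs cs' →
      DelStep (pre ++ Tree'.node a cs :: post) (pre ++ Tree'.node a cs' :: post)

/-- `DelSteps k F F'`: `F'` is obtained from `F` by exactly `k` node removals. -/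
inductive DelSteps {α : Type} : ℕ → Forest α → Forest α → Prop
  | refl (F : Forest α) : DelSteps 0 F F
  | tail {n : ℕ} {F G H : Forest α} : DelSteps n F G → DelStep G H → DelSteps (n + 1) F H
section Aux
variable {α : Type}

lemma Forest.size_append (l1 l2 : Forest α) :
    Forest.size (l1 ++ l2) = Forest.size l1 + Forest.size l2 := by
  induction l1 with
  | nil => simp [Forest.size]
  | cons t ts ih => simp [Forest.size, ih]; omega

lemma DelStep.size_eq {F F' : Forest α} (h : DelStep F F') :
    Forest.size F = Forest.size F' + 1 := by
  induction h with
  | delete pre a cs post =>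
      simp [Forest.size_append, Forest.size, Tree'.size]; omega
  | inside pre a post h ih =>
      simp [Forest.size_append, Forest.size, Tree'.size] at *; omega

lemma DelStep.toEdit {F F' : Forest α} (h : DelStep F F') : EditStep F F' := by
  induction h with
  | delete pre a cs post => exact EditStep.delete pre a cs post
  | inside pre a post h ih => exact EditStep.inside pre a post ih

/-- Splitting two decompositions of a list around a distinguished element. -/
lemma cons_split {β : Type} {x x' : β} {p q p' q' : List β}
    (h : p ++ x :: q = p' ++ x' :: q') :
    (p = p' ∧ x = x' ∧ q = q') ∨
    (∃ m, p' = p ++ x :: m ∧ q = m ++ x' :: q') ∨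
    (∃ m, p = p' ++ x' :: m ∧ q' = m ++ x :: q) := by
  induction p generalizing p' with
  | nil =>
    cases p' with
    | nil => simp at h; exact Or.inl ⟨rfl, h.1, h.2⟩
    | cons y ys =>
      simp at h
      exact Or.inr (Or.inl ⟨ys, by simp [h.1], h.2⟩)
  | cons z zs ih =>
    cases p' with
    | nil =>
      simp at h
      exact Or.inr (Or.inr ⟨zs, by simp [h.1], h.2.symm⟩)
    | cons y ys =>
      simp at h
      obtain ⟨rfl, h2⟩ := h
      rcases ih h2 with ⟨rfl, rfl, rfl⟩ | ⟨m, rfl, rfl⟩ | ⟨m, rfl, rfl⟩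
      · exact Or.inl ⟨rfl, rfl, rfl⟩
      · exact Or.inr (Or.inl ⟨m, rfl, rfl⟩)
      · exact Or.inr (Or.inr ⟨m, rfl, rfl⟩)

/-- The "atomic" part of an edit step at a given node. -/
def AtomE (a : α) (cs v : Forest α) : Prop :=
  v = cs ∨ (∃ b, v = [Tree'.node b cs]) ∨ (∃ cs', EditStep cs cs' ∧ v = [Tree'.node a cs'])

/-- The "atomic" part of a deletion step at a given node. -/
def AtomD (a : α) (cs v : Forest α) : Prop :=
  v = cs ∨ (∃ cs', DelStep cs cs' ∧ v = [Tree'.node a cs'])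

lemma editStep_of (p q : Forest α) {a : α} {cs v : Forest α} (hA : AtomE a cs v) :
    EditStep (p ++ Tree'.node a cs :: q) (p ++ v ++ q) := by
  rcases hA with rfl | ⟨b, rfl⟩ | ⟨cs', h, rfl⟩
  · exact EditStep.delete p a _ q
  · simpa using EditStep.relabel p a b _ q
  · simpa using EditStep.inside p a q h

lemma delStep_of (p q : Forest α) {a : α} {cs v : Forest α} (hA : AtomD a cs v) :
    DelStep (p ++ Tree'.node a cs :: q) (p ++ v ++ q) := by
  rcases hA with rfl | ⟨cs', h, rfl⟩
  · exact DelStep.delete p a _ q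
  · simpa using DelStep.inside p a q h

lemma editStep_iff {F H : Forest α} : EditStep F H ↔
    ∃ (p : Forest α) (a : α) (cs v q : Forest α),
      F = p ++ Tree'.node a cs :: q ∧ H = p ++ v ++ q ∧ AtomE a cs v := by
  constructor
  · intro h
    cases h with
    | delete pre a cs post => exact ⟨pre, a, cs, cs, post, rfl, rfl, Or.inl rfl⟩
    | relabel pre a b cs post =>
        exact ⟨pre, a, cs, [Tree'.node b cs], post, rfl, by simp, Or.inr (Or.inl ⟨b, rfl⟩)⟩
    | inside pre a post h =>
        exact ⟨pre, a, _, [Tree'.node a _], post, rfl, by simp, Or.inr (Or.inr ⟨_, h, rfl⟩)⟩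
  · rintro ⟨p, a, cs, v, q, rfl, rfl, hA⟩
    exact editStep_of p q hA

lemma EditStep.context {cs cs' : Forest α} (pre post : Forest α) (h : EditStep cs cs') :
    EditStep (pre ++ cs ++ post) (pre ++ cs' ++ post) := by
  cases h with
  | delete p a c q =>
      have := EditStep.delete (pre ++ p) a c (q ++ post)
      simpa [List.append_assoc] using this
  | relabel p a b c q =>
      have := EditStep.relabel (pre ++ p) a b c (q ++ post)
      simpa [List.append_assoc] using this
  | inside p a q h =>
      have := EditStep.inside (pre ++ p) a (q ++ post) h
      simpa [List.append_assoc] using this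

lemma DelStep.context {cs cs' : Forest α} (pre post : Forest α) (h : DelStep cs cs') :
    DelStep (pre ++ cs ++ post) (pre ++ cs' ++ post) := by
  cases h with
  | delete p a c q =>
      have := DelStep.delete (pre ++ p) a c (q ++ post)
      simpa [List.append_assoc] using this
  | inside p a q h =>
      have := DelStep.inside (pre ++ p) a (q ++ post) h
      simpa [List.append_assoc] using this

end Aux
section Comm
variable {α : Type}

/-- Commutation: a deletion and an edit applied to the same forest can be joined. -/
lemma del_edit_comm {F F' H : Forest α} (hd : DelStep F F') (he : EditStep F H) :
    F' = H ∨ DelStep H F' ∨ ∃ H', EditStep F' H' ∧ DelStep H H' := by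
  induction hd generalizing H with
  | delete p a cs q =>
    rcases editStep_iff.mp he with ⟨p', a', cs', v', q', hF, hH, hA⟩
    rcases cons_split hF with ⟨rfl, hx, rfl⟩ | ⟨m, rfl, rfl⟩ | ⟨m, rfl, rfl⟩
    · -- same position
      obtain ⟨rfl, rfl⟩ : a = a' ∧ cs = cs' := by
        injection hx with h1 h2; exact ⟨h1, h2⟩
      subst hH
      rcases hA with rfl | ⟨b, rfl⟩ | ⟨cs₂, hcs, rfl⟩
      · exact Or.inl rfl
      · refine Or.inr (Or.inl ?_)
        simpa using DelStep.delete p b cs q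
      · refine Or.inr (Or.inr ⟨p ++ cs₂ ++ q, ?_, ?_⟩)
        · exact EditStep.context p q hcs
        · simpa using DelStep.delete p a cs₂ q
    · -- edit strictly to the right of the deleted node
      subst hH
      refine Or.inr (Or.inr ⟨p ++ cs ++ m ++ v' ++ q', ?_, ?_⟩)
      · have := editStep_of (p ++ cs ++ m) q' hA
        simpa [List.append_assoc] using this
      · have : AtomD a cs cs := Or.inl rfl
        have := delStep_of p (m ++ v' ++ q') this
        simpa [List.append_assoc] using this
    · -- edit strictly to the left of the deleted node
      subst hH
      refine Or.inr (Or.inr ⟨p' ++ v' ++ m ++ cs ++ q, ?_, ?_⟩)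
      · have := editStep_of p' (m ++ cs ++ q) hA
        simpa [List.append_assoc] using this
      · have hAd : AtomD a cs cs := Or.inl rfl
        have := delStep_of (p' ++ v' ++ m) q hAd
        simpa [List.append_assoc] using this
  | inside p a q hcs ih =>
    rename_i cs cs₁
    rcases editStep_iff.mp he with ⟨p', a', cs', v', q', hF, hH, hA⟩
    rcases cons_split hF with ⟨rfl, hx, rfl⟩ | ⟨m, rfl, rfl⟩ | ⟨m, rfl, rfl⟩
    · -- same position
      obtain ⟨rfl, rfl⟩ : a = a' ∧ cs = cs' := by
        injection hx with h1 h2; exact ⟨h1, h2⟩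
      subst hH
      rcases hA with rfl | ⟨b, rfl⟩ | ⟨cs₂, hcs₂, rfl⟩
      · refine Or.inr (Or.inr ⟨p ++ cs₁ ++ q, ?_, ?_⟩)
        · exact EditStep.delete p a cs₁ q
        · exact DelStep.context p q hcs
      · refine Or.inr (Or.inr ⟨p ++ Tree'.node b cs₁ :: q, ?_, ?_⟩)
        · exact EditStep.relabel p a b cs₁ q
        · simpa using DelStep.inside p b q hcs
      · rcases ih hcs₂ with rfl | hd2 | ⟨c₃, he3, hd3⟩
        · exact Or.inl (by simp)
        · refine Or.inr (Or.inl ?_)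
          simpa using DelStep.inside p a q hd2
        · refine Or.inr (Or.inr ⟨p ++ Tree'.node a c₃ :: q, ?_, ?_⟩)
          · exact EditStep.inside p a q he3
          · simpa using DelStep.inside p a q hd3
    · -- edit to the right
      subst hH
      refine Or.inr (Or.inr ⟨p ++ Tree'.node a cs₁ :: m ++ v' ++ q', ?_, ?_⟩)
      · have := editStep_of (p ++ Tree'.node a cs₁ :: m) q' hA
        simpa [List.append_assoc] using this
      · have hAd : AtomD a cs [Tree'.node a cs₁] := Or.inr ⟨cs₁, hcs, rfl⟩
        have := delStep_of p (m ++ v' ++ q') hAd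
        simpa [List.append_assoc] using this
    · -- edit to the left
      subst hH
      refine Or.inr (Or.inr ⟨p' ++ v' ++ m ++ Tree'.node a cs₁ :: q, ?_, ?_⟩)
      · have := editStep_of p' (m ++ Tree'.node a cs₁ :: q) hA
        simpa [List.append_assoc] using this
      · have hAd : AtomD a cs [Tree'.node a cs₁] := Or.inr ⟨cs₁, hcs, rfl⟩
        have := delStep_of (p' ++ v' ++ m) q hAd
        simpa [List.append_assoc] using this

end Comm
section Rest
variable {α : Type}

lemma EditSteps.head {F G H : Forest α} {n : ℕ} (h1 : EditStep F G)
    (h2 : EditSteps n G H) : EditSteps (n + 1) F H := by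
  induction h2 with
  | refl G => exact (EditSteps.refl F).tail h1
  | tail h step ih => exact (ih h1).tail step

lemma DelSteps.toEdits {k : ℕ} {F F' : Forest α} (h : DelSteps k F F') :
    EditSteps k F F' := by
  induction h with
  | refl F => exact EditSteps.refl F
  | tail h step ih => exact ih.tail step.toEdit

lemma EditSteps.trans {m n : ℕ} {F G H : Forest α} (h1 : EditSteps m F G)
    (h2 : EditSteps n G H) : EditSteps (m + n) F H := by
  induction h2 with
  | refl G => exact h1
  | tail h step ih => exact (ih h1).tail step

lemma editSteps_to_nil : ∀ (n : ℕ) (F : Forest α), Forest.size F ≤ n →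
    ∃ m, EditSteps m F ([] : Forest α) := by
  intro n
  induction n with
  | zero =>
    intro F hF
    cases F with
    | nil => exact ⟨0, EditSteps.refl []⟩
    | cons t ts =>
      cases t with
      | node a cs => simp [Forest.size, Tree'.size] at hF
  | succ n ih =>
    intro F hF
    cases F with
    | nil => exact ⟨0, EditSteps.refl []⟩
    | cons t ts =>
      cases t with
      | node a cs =>
        have step : EditStep (Tree'.node a cs :: ts) (cs ++ ts) := by
          simpa using EditStep.delete [] a cs ts
        have hsz : Forest.size (cs ++ ts) ≤ n := by
          simp [Forest.size, Tree'.size, Forest.size_append] at hF ⊢; omega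
        obtain ⟨m, hm⟩ := ih (cs ++ ts) hsz
        exact ⟨m + 1, EditSteps.head step hm⟩

lemma ed_set_nonempty (F G : Forest α) :
    {k | ∃ (k1 k2 : ℕ) (H : Forest α), k = k1 + k2 ∧ EditSteps k1 F H ∧ EditSteps k2 G H}.Nonempty := by
  obtain ⟨m1, h1⟩ := editSteps_to_nil (Forest.size F) F le_rfl
  obtain ⟨m2, h2⟩ := editSteps_to_nil (Forest.size G) G le_rfl
  exact ⟨m1 + m2, m1, m2, [], rfl, h1, h2⟩

lemma ed_spec (F G : Forest α) :
    ∃ (k1 k2 : ℕ) (H : Forest α), ed F G = k1 + k2 ∧ EditSteps k1 F H ∧ EditSteps k2 G H :=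
  Nat.sInf_mem (ed_set_nonempty F G)

lemma ed_le {F G : Forest α} {k1 k2 : ℕ} {H : Forest α}
    (h1 : EditSteps k1 F H) (h2 : EditSteps k2 G H) : ed F G ≤ k1 + k2 :=
  Nat.sInf_le ⟨k1, k2, H, rfl, h1, h2⟩

/-- Commuting one deletion through a sequence of edits. -/
lemma del_editSteps_comm {F F' H : Forest α} {n : ℕ} (hd : DelStep F F')
    (hs : EditSteps n F H) :
    ∃ m H', m ≤ n ∧ EditSteps m F' H' ∧ (H' = H ∨ DelStep H H') := by
  induction hs with
  | refl F => exact ⟨0, F', le_refl 0, EditSteps.refl F', Or.inr hd⟩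
  | tail hFG hGH ih =>
    obtain ⟨m, H'', hm, hsteps, hcase⟩ := ih hd
    rcases hcase with rfl | hdel
    · exact ⟨m + 1, _, by omega, hsteps.tail hGH, Or.inl rfl⟩
    · rcases del_edit_comm hdel hGH with rfl | hd2 | ⟨H₂, he2, hd2⟩
      · exact ⟨m, _, by omega, hsteps, Or.inl rfl⟩
      · exact ⟨m, H'', by omega, hsteps, Or.inr hd2⟩
      · exact ⟨m + 1, H₂, by omega, hsteps.tail he2, Or.inr hd2⟩

lemma ed_le_of_del {F F' : Forest α} (hd : DelStep F F') (G : Forest α) :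
    ed F G ≤ ed F' G + 1 := by
  obtain ⟨k1, k2, H, heq, h1, h2⟩ := ed_spec F' G
  have h1' : EditSteps (k1 + 1) F H := EditSteps.head hd.toEdit h1
  have := ed_le h1' h2
  omega

lemma del_ed_le {F F' : Forest α} (hd : DelStep F F') (G : Forest α) :
    ed F' G ≤ ed F G + 1 := by
  obtain ⟨k1, k2, H, heq, h1, h2⟩ := ed_spec F G
  obtain ⟨m, H', hm, hs, hcase⟩ := del_editSteps_comm hd h1
  rcases hcase with rfl | hdel
  · have := ed_le hs h2; omega
  · have h2' : EditSteps (k2 + 1) G H' := h2.tail hdel.toEdit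
    have := ed_le hs h2'
    omega

lemma sim_del {F F' : Forest α} (hd : DelStep F F') (G : Forest α) :
    |sim F G - sim F' G| ≤ 2 := by
  have hs := hd.size_eq
  have h1 := ed_le_of_del hd G
  have h2 := del_ed_le hd G
  unfold sim
  rw [abs_le]
  constructor <;> omega

end Rest

/-- If `F'` is obtained from `F` by removing `k = |F \ F'|` nodes, then for any forest `G`,
`|sim(F, G) - sim(F', G)| ≤ 2 · |F \ F'|`. -/
theorem sim_diff_le_removed {α : Type} (k : ℕ) (F F' G : Forest α)
    (h : DelSteps k F F') : |sim F G - sim F' G| ≤ 2 * (k : ℤ) := by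
  induction h with
  | refl F => simp
  | tail h1 h2 ih =>
    rename_i n F₁ G₁ H₁
    calc |sim F₁ G - sim H₁ G| ≤ |sim F₁ G - sim G₁ G| + |sim G₁ G - sim H₁ G| :=
          abs_sub_le _ _ _
      _ ≤ 2 * (n : ℤ) + 2 := add_le_add ih (sim_del h2 G)
      _ = 2 * ((n : ℤ) + 1) := by ring
      _ = 2 * ((n + 1 : ℕ) : ℤ) := by norm_cast
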